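/- For every (x,t) ∈ ℝ^d × ℝ, the difference of posterior variances satisfies σ²_D̃(x,t) − σ²_D(x,t) = E·k((x,t),(x₁,t₁))² + k((x,t),(x₁,t₁))·Σ_{j=2}^{n} c_j·k((x,t),(x_j,t_j)) + κ̃(x,t)ᵀ M κ̃(x,t), where c ∈ ℝ^{n−1} is defined by cᵀ = G + Hᵀ and M = F − Δ̃⁻¹. -/

import Mathlib

open Matrix

/-- Difference of posterior variances after removing the first observation (equation (26)
of the paper): `σ²_D̃ − σ²_D = E·k(·,(x₁,t₁))² + k(·,(x₁,t₁))·Σⱼ cⱼ·k(·,(xⱼ,tⱼ)) + κ̃ᵀMκ̃`. -/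
theorem stmt_3
    (d n : ℕ) (hd : 1 ≤ d) (hn : 1 ≤ n)
    (lam sig : ℝ) (hlam : 0 < lam) (hsig : 0 < sig)
    (kS kT : ℝ → ℝ)
    (hkSmeas : Measurable kS) (hkTmeas : Measurable kT)
    (hkSrange : ∀ r, kS r ∈ Set.Icc (0 : ℝ) 1) (hkTrange : ∀ r, kT r ∈ Set.Icc (0 : ℝ) 1)
    (hkS0 : kS 0 = 1) (hkT0 : kT 0 = 1)
    (k : (EuclideanSpace ℝ (Fin d) × ℝ) → (EuclideanSpace ℝ (Fin d) × ℝ) → ℝ)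
    (hk : ∀ p q, k p q = lam * kS (‖p.1 - q.1‖) * kT (|p.2 - q.2|))
    (pts : Fin (n + 1) → EuclideanSpace ℝ (Fin d) × ℝ)
    (Δ : Matrix (Fin (n + 1)) (Fin (n + 1)) ℝ)
    (hΔ : ∀ i j, Δ i j = k (pts i) (pts j) + sig ^ 2 * (if i = j then 1 else 0))
    (hPD : Δ.PosDef)
    (Δt : Matrix (Fin n) (Fin n) ℝ)
    (hΔt : Δt = Δ.submatrix Fin.succ Fin.succ)
    (k1 : Fin n → ℝ)
    (hk1 : ∀ j : Fin n, k1 j = k (pts 0) (pts j.succ))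
    (E : ℝ) (hE : E = (lam + sig ^ 2 - k1 ⬝ᵥ Δt⁻¹ *ᵥ k1)⁻¹)
    (F : Matrix (Fin n) (Fin n) ℝ)
    (hF : F = (Δt - (lam + sig ^ 2)⁻¹ • vecMulVec k1 k1)⁻¹)
    (G : Fin n → ℝ) (hG : G = -(E • (k1 ᵥ* Δt⁻¹)))
    (H : Fin n → ℝ) (hH : H = -((lam + sig ^ 2)⁻¹ • (F *ᵥ k1)))
    (σ2D σ2Dt : (EuclideanSpace ℝ (Fin d) × ℝ) → ℝ)
    (hσ2D : ∀ p, σ2D p = lam -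
      (fun i : Fin (n + 1) => k p (pts i)) ⬝ᵥ Δ⁻¹ *ᵥ (fun i : Fin (n + 1) => k p (pts i)))
    (hσ2Dt : ∀ p, σ2Dt p = lam -
      (fun j : Fin n => k p (pts j.succ)) ⬝ᵥ Δt⁻¹ *ᵥ (fun j : Fin n => k p (pts j.succ)))
    (c : Fin n → ℝ) (hc : c = G + H)
    (M : Matrix (Fin n) (Fin n) ℝ) (hM : M = F - Δt⁻¹) :
    ∀ p : EuclideanSpace ℝ (Fin d) × ℝ,
      σ2Dt p - σ2D p =
        E * (k p (pts 0)) ^ 2 + k p (pts 0) * ∑ j : Fin n, c j * k p (pts j.succ) +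
          (fun j : Fin n => k p (pts j.succ)) ⬝ᵥ M *ᵥ (fun j : Fin n => k p (pts j.succ)) := by
  have ha : (0:ℝ) < lam + sig ^ 2 := by positivity
  set a : ℝ := lam + sig ^ 2 with ha'
  -- basic entry facts
  have hkself : ∀ p, k p p = lam := by
    intro p; rw [hk]; simp [hkS0, hkT0]
  have hΔ00 : Δ 0 0 = a := by rw [hΔ, hkself]; simp [ha']
  have hΔ0s : ∀ j : Fin n, Δ 0 j.succ = k1 j := by
    intro j; rw [hΔ, hk1]; simp [Ne.symm (Fin.succ_ne_zero j)]
  have hsymm : ∀ i j, Δ i j = Δ j i := by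
    intro i j
    have := hPD.1.apply j i
    simpa using this
  have hΔs0 : ∀ i : Fin n, Δ i.succ 0 = k1 i := by
    intro i; rw [hsymm]; exact hΔ0s i
  have hΔtE : ∀ i j, Δ i.succ j.succ = Δt i j := by
    intro i j; rw [hΔt]; rfl
  have hpos : ∀ x : Fin (n+1) → ℝ, x ≠ 0 → 0 < x ⬝ᵥ Δ *ᵥ x := by
    intro x hx
    simpa using hPD.dotProduct_mulVec_pos hx
  -- quadratic form helper
  have hquad : ∀ (α : ℝ) (v : Fin n → ℝ),
      (Fin.cons α v : Fin (n+1) → ℝ) ⬝ᵥ Δ *ᵥ (Fin.cons α v) =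
        a * α ^ 2 + 2 * α * (k1 ⬝ᵥ v) + v ⬝ᵥ Δt *ᵥ v := by
    intro α v
    have hmv0 : (Δ *ᵥ (Fin.cons α v : Fin (n+1) → ℝ)) 0 = a * α + k1 ⬝ᵥ v := by
      simp [mulVec, dotProduct, Fin.sum_univ_succ, hΔ00, hΔ0s]
    have hmvs : ∀ i : Fin n, (Δ *ᵥ (Fin.cons α v : Fin (n+1) → ℝ)) i.succ =
        k1 i * α + (Δt *ᵥ v) i := by
      intro i
      simp [mulVec, dotProduct, Fin.sum_univ_succ, hΔs0, hΔtE]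
    rw [dotProduct, Fin.sum_univ_succ]
    simp only [Fin.cons_zero, Fin.cons_succ, hmv0, hmvs]
    rw [Finset.sum_congr rfl (fun i _ => by ring_nf :
      ∀ i ∈ Finset.univ, v i * (k1 i * α + (Δt *ᵥ v) i) = α * (k1 i * v i) + v i * (Δt *ᵥ v) i)]
    rw [Finset.sum_add_distrib, ← Finset.mul_sum]
    simp only [dotProduct, mulVec]
    ring_nf
  -- cons vectors are nonzero
  have hconsne : ∀ (α : ℝ) (v : Fin n → ℝ), v ≠ 0 → (Fin.cons α v : Fin (n+1) → ℝ) ≠ 0 := by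
    intro α v hv h
    apply hv
    funext i
    have := congrFun h i.succ
    simpa using this
  -- Δt is positive definite
  have hPDt : Δt.PosDef := by
    refine Matrix.PosDef.of_dotProduct_mulVec_pos ?_ ?_
    · ext i j
      simp only [conjTranspose_apply, hΔt, submatrix_apply, star_trivial]
      exact hsymm _ _
    · intro v hv
      have h1 := hpos (Fin.cons 0 v) (hconsne 0 v hv)
      rw [hquad 0 v] at h1
      simpa using h1
  have hdetΔt : IsUnit Δt.det := hPDt.det_pos.ne'.isUnit
  have hΔtinv1 : Δt * Δt⁻¹ = 1 := mul_nonsing_inv _ hdetΔt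
  have hΔtinvsymm : ∀ i j, Δt⁻¹ i j = Δt⁻¹ j i := by
    intro i j
    have := (hPDt.1.inv).apply j i
    simpa using this
  have hmm' : Δt *ᵥ (Δt⁻¹ *ᵥ k1) = k1 := by
    rw [mulVec_mulVec, hΔtinv1, one_mulVec]
  -- vecMulVec action
  have hvmv : ∀ v : Fin n → ℝ, (vecMulVec k1 k1) *ᵥ v = (k1 ⬝ᵥ v) • k1 := by
    intro v; funext i
    simp only [mulVec, vecMulVec_apply, dotProduct, Pi.smul_apply, smul_eq_mul, Finset.sum_mul]
    exact Finset.sum_congr rfl fun j _ => by ring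
  set T : Matrix (Fin n) (Fin n) ℝ := Δt - a⁻¹ • vecMulVec k1 k1 with hT
  have hTmv : ∀ v, T *ᵥ v = Δt *ᵥ v - (a⁻¹ * (k1 ⬝ᵥ v)) • k1 := by
    intro v
    rw [hT, sub_mulVec, smul_mulVec, hvmv, smul_smul]
  -- T is positive definite
  have hPDT : T.PosDef := by
    refine Matrix.PosDef.of_dotProduct_mulVec_pos ?_ ?_
    · ext i j
      have h1 := hPDt.1.apply j i
      simp only [star_trivial] at h1
      simp only [hT, conjTranspose_apply, star_trivial, Matrix.sub_apply, Matrix.smul_apply,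
        vecMulVec_apply, smul_eq_mul]
      rw [h1]; ring
    · intro v hv
      have h1 := hpos (Fin.cons (-(a⁻¹ * (k1 ⬝ᵥ v))) v) (hconsne _ v hv)
      rw [hquad (-(a⁻¹ * (k1 ⬝ᵥ v))) v] at h1
      have hvT : v ⬝ᵥ T *ᵥ v = v ⬝ᵥ Δt *ᵥ v - a⁻¹ * (k1 ⬝ᵥ v) * (k1 ⬝ᵥ v) := by
        rw [hTmv, dotProduct_sub, dotProduct_smul, smul_eq_mul, dotProduct_comm v k1]
      have heq : a * (-(a⁻¹ * (k1 ⬝ᵥ v))) ^ 2 + 2 * (-(a⁻¹ * (k1 ⬝ᵥ v))) * (k1 ⬝ᵥ v)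
          + v ⬝ᵥ Δt *ᵥ v = v ⬝ᵥ Δt *ᵥ v - a⁻¹ * (k1 ⬝ᵥ v) * (k1 ⬝ᵥ v) := by
        field_simp
        ring
      rw [heq] at h1
      simpa [hvT] using h1
  -- Schur complement scalar is positive
  have hSpos : 0 < a - k1 ⬝ᵥ Δt⁻¹ *ᵥ k1 := by
    have hwne : (Fin.cons 1 (-(Δt⁻¹ *ᵥ k1)) : Fin (n+1) → ℝ) ≠ 0 := by
      intro h
      have := congrFun h 0
      simp at this
    have h1 := hpos _ hwne
    rw [hquad 1 (-(Δt⁻¹ *ᵥ k1))] at h1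
    rw [dotProduct_neg, neg_dotProduct, mulVec_neg, dotProduct_neg, neg_neg, hmm'] at h1
    rw [dotProduct_comm (Δt⁻¹ *ᵥ k1) k1] at h1
    nlinarith [h1]
  have hES : E * (a - k1 ⬝ᵥ Δt⁻¹ *ᵥ k1) = 1 := by
    rw [hE]; exact inv_mul_cancel₀ hSpos.ne'
  -- F is the inverse of T
  have hdetT : IsUnit T.det := hPDT.det_pos.ne'.isUnit
  have hFT : F * T = 1 := by rw [hF]; exact nonsing_inv_mul _ hdetT
  have hTF : T * F = 1 := by rw [hF]; exact mul_nonsing_inv _ hdetT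
  -- key identity : F *ᵥ k1 = (a*E) • (Δt⁻¹ *ᵥ k1)
  have hTx : T *ᵥ ((a * E) • (Δt⁻¹ *ᵥ k1)) = k1 := by
    rw [mulVec_smul, hTmv, hmm']
    funext i
    simp only [Pi.smul_apply, Pi.sub_apply, smul_eq_mul]
    have h2 : a * E * (k1 i - a⁻¹ * (k1 ⬝ᵥ (Δt⁻¹ *ᵥ k1)) * k1 i)
        = (E * (a - k1 ⬝ᵥ Δt⁻¹ *ᵥ k1)) * k1 i := by
      field_simp
    rw [h2, hES, one_mul]
  have hFk1 : F *ᵥ k1 = (a * E) • (Δt⁻¹ *ᵥ k1) := by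
    conv_lhs => rw [← hTx]
    rw [mulVec_mulVec, hFT, one_mulVec]
  -- symmetry conversions
  have hΔtinvT : (Δt⁻¹)ᵀ = Δt⁻¹ := Matrix.ext fun i j => hΔtinvsymm j i
  have hvm : k1 ᵥ* Δt⁻¹ = Δt⁻¹ *ᵥ k1 := by
    conv_rhs => rw [← hΔtinvT]
    exact (mulVec_transpose _ _).symm
  have hFsymT : Fᵀ = F := by
    ext i j
    have h1 := (hPDT.1.inv).apply j i
    simp only [star_trivial] at h1
    rw [transpose_apply, hF]
    exact h1.symm
  have hvmF : k1 ᵥ* F = F *ᵥ k1 := by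
    conv_rhs => rw [← hFsymT]
    exact (mulVec_transpose _ _).symm
  have hvmF' : k1 ᵥ* F = (a * E) • (k1 ᵥ* Δt⁻¹) := by
    rw [hvmF, hFk1, hvm]
  -- the candidate inverse of Δ
  set B : Matrix (Fin (n+1)) (Fin (n+1)) ℝ :=
    Matrix.of (Fin.cons (Fin.cons E G) (fun i => Fin.cons (H i) (fun j => F i j))) with hB
  have hB00 : B 0 0 = E := rfl
  have hB0s : ∀ j : Fin n, B 0 j.succ = G j := by
    intro j; simp [hB]
  have hBs0 : ∀ i : Fin n, B i.succ 0 = H i := by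
    intro i; simp [hB]
  have hBss : ∀ i j : Fin n, B i.succ j.succ = F i j := by
    intro i j; simp [hB]
  -- Δ * B = 1
  have hΔB : Δ * B = 1 := by
    ext i j
    rw [mul_apply, Fin.sum_univ_succ]
    refine Fin.cases ?_ (fun i' => ?_) i <;> refine Fin.cases ?_ (fun j' => ?_) j
    · -- (0,0)
      simp only [hB00, hBs0, hΔ00, hΔ0s, one_apply_eq]
      have h1 : ∑ m : Fin n, k1 m * H m = -(a⁻¹ * (k1 ⬝ᵥ (F *ᵥ k1))) := by
        rw [hH]
        simp only [Pi.neg_apply, Pi.smul_apply, smul_eq_mul, dotProduct, Finset.mul_sum]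
        rw [← Finset.sum_neg_distrib]
        exact Finset.sum_congr rfl fun m _ => by ring
      rw [h1, hFk1, dotProduct_smul, smul_eq_mul]
      have h2 : a * E + -(a⁻¹ * (a * E * (k1 ⬝ᵥ Δt⁻¹ *ᵥ k1)))
          = E * (a - k1 ⬝ᵥ Δt⁻¹ *ᵥ k1) := by
        field_simp
        ring
      rw [h2, hES]
    · -- (0, j.succ)
      simp only [hB0s, hBss, hΔ00, hΔ0s]
      have h0 : (1 : Matrix (Fin (n+1)) (Fin (n+1)) ℝ) 0 j'.succ = 0 := by
        rw [one_apply_ne (Ne.symm (Fin.succ_ne_zero j'))]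
      rw [h0]
      have h1 : ∑ m : Fin n, k1 m * F m j' = (k1 ᵥ* F) j' := by
        simp [vecMul, dotProduct]
      rw [h1, hvmF', hG]
      simp only [Pi.smul_apply, Pi.neg_apply, smul_eq_mul]
      ring
    · -- (i.succ, 0)
      simp only [hB00, hBs0, hΔs0, hΔtE]
      have h0 : (1 : Matrix (Fin (n+1)) (Fin (n+1)) ℝ) i'.succ 0 = 0 := by
        rw [one_apply_ne (Fin.succ_ne_zero i')]
      rw [h0]
      have h1 : ∑ m : Fin n, Δt i' m * H m = (Δt *ᵥ H) i' := by
        simp [mulVec, dotProduct]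
      rw [h1, hH]
      have h2 : Δt *ᵥ (-(a⁻¹ • (F *ᵥ k1))) = -(a⁻¹ • (Δt *ᵥ (F *ᵥ k1))) := by
        rw [mulVec_neg, mulVec_smul]
      rw [h2, hFk1]
      have h3 : Δt *ᵥ ((a * E) • (Δt⁻¹ *ᵥ k1)) = (a * E) • k1 := by
        rw [mulVec_smul, hmm']
      rw [h3]
      simp only [Pi.neg_apply, Pi.smul_apply, smul_eq_mul]
      field_simp
      ring
    · -- (i.succ, j.succ)
      simp only [hB0s, hBss, hΔs0, hΔtE]
      have h0 : (1 : Matrix (Fin (n+1)) (Fin (n+1)) ℝ) i'.succ j'.succ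
          = (1 : Matrix (Fin n) (Fin n) ℝ) i' j' := by
        simp [one_apply, Fin.succ_inj]
      rw [h0]
      have h1 : ∑ m : Fin n, Δt i' m * F m j' = (Δt * F) i' j' := by
        rw [mul_apply]
      rw [h1]
      have h2 : Δt * F = 1 + a⁻¹ • (vecMulVec k1 (k1 ᵥ* F)) := by
        have hd : Δt = T + a⁻¹ • vecMulVec k1 k1 := by
          rw [hT, sub_add_cancel]
        rw [hd, add_mul, hTF, smul_mul]
        congr 1
        congr 1
        ext x y
        rw [mul_apply]
        simp only [vecMulVec_apply, vecMul, dotProduct, Finset.mul_sum]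
        exact Finset.sum_congr rfl fun m _ => by ring
      rw [h2]
      simp only [Matrix.add_apply, Matrix.smul_apply, vecMulVec_apply, smul_eq_mul, hvmF', hG,
        Pi.smul_apply, Pi.neg_apply]
      field_simp
      ring
  have hΔinv : Δ⁻¹ = B := inv_eq_right_inv hΔB
  -- final computation
  intro p
  rw [hσ2Dt p, hσ2D p, hΔinv, hc, hM]
  set u := k p (pts 0) with hu
  set κt : Fin n → ℝ := fun j => k p (pts j.succ) with hκt
  simp only [show ∀ j : Fin n, k p (pts j.succ) = κt j from fun _ => rfl]
  have hκ : (fun i : Fin (n+1) => k p (pts i)) = Fin.cons u κt := by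
    funext i
    refine Fin.cases rfl (fun i' => rfl) i
  rw [hκ]
  have hBmv0 : (B *ᵥ Fin.cons u κt) 0 = E * u + G ⬝ᵥ κt := by
    simp [mulVec, dotProduct, Fin.sum_univ_succ, hB00, hB0s]
  have hBmvs : ∀ i : Fin n, (B *ᵥ Fin.cons u κt) i.succ = H i * u + (F *ᵥ κt) i := by
    intro i
    simp [mulVec, dotProduct, Fin.sum_univ_succ, hBs0, hBss]
  have hBform : (Fin.cons u κt : Fin (n+1) → ℝ) ⬝ᵥ B *ᵥ Fin.cons u κt =
      E * u ^ 2 + u * (G ⬝ᵥ κt) + (κt ⬝ᵥ H) * u + κt ⬝ᵥ F *ᵥ κt := by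
    rw [dotProduct, Fin.sum_univ_succ]
    simp only [Fin.cons_zero, Fin.cons_succ, hBmv0, hBmvs]
    rw [Finset.sum_congr rfl (fun i _ => by ring :
      ∀ i ∈ Finset.univ, κt i * (H i * u + (F *ᵥ κt) i) = κt i * H i * u + κt i * (F *ᵥ κt) i)]
    rw [Finset.sum_add_distrib, ← Finset.sum_mul]
    simp only [dotProduct]
    ring
  rw [hBform]
  have hsum : ∑ j : Fin n, (G + H) j * κt j = G ⬝ᵥ κt + H ⬝ᵥ κt := by
    simp only [Pi.add_apply, dotProduct, add_mul, Finset.sum_add_distrib]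
  have hsub : κt ⬝ᵥ (F - Δt⁻¹) *ᵥ κt = κt ⬝ᵥ F *ᵥ κt - κt ⬝ᵥ Δt⁻¹ *ᵥ κt := by
    rw [sub_mulVec, dotProduct_sub]
  rw [hsum, hsub, dotProduct_comm κt H]
  ring
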